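/- arXiv:2309.01922 — 5 statements merged into one kernel-verified Lean document; each statement's English description precedes it below -/
import Mathlib

section
/- For finite state space S, action space A, stationary distributions d^π of policy π, and Q-function Q^{π'} of policy π' satisfying the average-reward Bellman equation, the difference of average rewards satisfies J^π − J^{π'} = Σ_s Σ_a d^π(s)(π(a|s) − π'(a|s)) Q^{π'}(s,a). -/
/-- Performance difference lemma (Q-function form) for average-reward MDPs. -/
theorem stmt_0 {S A : Type*} [Fintype S] [Fintype A]
    (P : S → A → S → ℝ) (r : S → A → ℝ)
    (π π' : S → A → ℝ)
    (hπ : ∀ s, ∑ a, π s a = 1) (hπ' : ∀ s, ∑ a, π' s a = 1)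
    (d : S → ℝ) (Jπ Jπ' : ℝ) (Q' : S → A → ℝ)
    (hd1 : ∑ s, d s = 1)
    (hstat : ∀ s', ∑ s, d s * ∑ a, π s a * P s a s' = d s')
    (hJ : Jπ = ∑ s, d s * ∑ a, π s a * r s a)
    (hbell : ∀ s a,
      Q' s a = r s a - Jπ' + ∑ s', P s a s' * (∑ a', π' s' a' * Q' s' a')) :
    Jπ - Jπ' = ∑ s, ∑ a, d s * (π s a - π' s a) * Q' s a := by
  set V' : S → ℝ := fun s => ∑ a, π' s a * Q' s a with hV'
  have hsplit : ∀ s a, d s * (π s a - π' s a) * Q' s a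
      = d s * π s a * Q' s a - d s * (π' s a * Q' s a) := by
    intro s a; ring
  have h2 : ∑ s, ∑ a, d s * (π' s a * Q' s a) = ∑ s, d s * V' s := by
    refine Finset.sum_congr rfl fun s _ => ?_
    rw [hV', ← Finset.mul_sum]
  have h1 : ∑ s, ∑ a, d s * π s a * Q' s a
      = Jπ - Jπ' + ∑ s, d s * V' s := by
    have hterm : ∀ s a, d s * π s a * Q' s a
        = d s * π s a * r s a - d s * π s a * Jπ'
          + ∑ s', d s * (π s a * P s a s') * V' s' := by
      intro s a
      rw [hbell s a]
      rw [mul_add, mul_sub, Finset.mul_sum]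
      congr 1
      refine Finset.sum_congr rfl fun s' _ => ?_
      ring
    calc ∑ s, ∑ a, d s * π s a * Q' s a
        = ∑ s, ∑ a, (d s * π s a * r s a - d s * π s a * Jπ'
            + ∑ s', d s * (π s a * P s a s') * V' s') := by
          exact Finset.sum_congr rfl fun s _ => Finset.sum_congr rfl fun a _ => hterm s a
      _ = (∑ s, ∑ a, d s * π s a * r s a) - (∑ s, ∑ a, d s * π s a * Jπ')
            + ∑ s, ∑ a, ∑ s', d s * (π s a * P s a s') * V' s' := by
          simp [Finset.sum_add_distrib, Finset.sum_sub_distrib]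
      _ = Jπ - Jπ' + ∑ s, d s * V' s := by
          congr 1
          · congr 1
            · rw [hJ]
              refine Finset.sum_congr rfl fun s _ => ?_
              rw [Finset.mul_sum]
              exact Finset.sum_congr rfl fun a _ => by ring
            · have : ∑ s, ∑ a, d s * π s a * Jπ' = ∑ s, (d s * (∑ a, π s a)) * Jπ' := by
                refine Finset.sum_congr rfl fun s _ => ?_
                rw [Finset.mul_sum, Finset.sum_mul]
              rw [this]
              simp only [hπ, mul_one]
              rw [← Finset.sum_mul, hd1, one_mul]
          · calc ∑ s, ∑ a, ∑ s', d s * (π s a * P s a s') * V' s'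
                = ∑ s, ∑ s', ∑ a, d s * (π s a * P s a s') * V' s' :=
                  Finset.sum_congr rfl fun s _ => Finset.sum_comm
              _ = ∑ s', ∑ s, ∑ a, d s * (π s a * P s a s') * V' s' :=
                  Finset.sum_comm
              _ = ∑ s', (∑ s, d s * ∑ a, π s a * P s a s') * V' s' := by
                  simp only [Finset.mul_sum, Finset.sum_mul]
              _ = ∑ s', d s' * V' s' := by
                  refine Finset.sum_congr rfl fun s' _ => ?_
                  rw [hstat s']
  calc Jπ - Jπ' = (Jπ - Jπ' + ∑ s, d s * V' s) - ∑ s, d s * V' s := by ring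
    _ = (∑ s, ∑ a, d s * π s a * Q' s a) - ∑ s, ∑ a, d s * (π' s a * Q' s a) := by
        rw [h1, h2]
    _ = ∑ s, ∑ a, d s * (π s a - π' s a) * Q' s a := by
        rw [← Finset.sum_sub_distrib]
        refine Finset.sum_congr rfl fun s _ => ?_
        rw [← Finset.sum_sub_distrib]
        exact Finset.sum_congr rfl fun a _ => (hsplit s a).symm
end

section
/- Under the same setup, the performance difference can be written using advantage functions: J^π − J^{π'} = E_{s∼d^π} E_{a∼π(·|s)}[A^{π'}(s,a)], where A^{π'}(s,a) = Q^{π'}(s,a) − V^{π'}(s). -/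
/-- Performance difference lemma (advantage form) for average-reward MDPs:
`J^π − J^{π'} = E_{s∼d^π} E_{a∼π(·|s)} [A^{π'}(s,a)]`. -/
theorem stmt_1 {S A : Type*} [Fintype S] [Fintype A]
    (P : S → A → S → ℝ) (r : S → A → ℝ)
    (π π' : S → A → ℝ)
    (hπ : ∀ s, ∑ a, π s a = 1) (hπ' : ∀ s, ∑ a, π' s a = 1)
    (d : S → ℝ) (Jπ Jπ' : ℝ) (Q' : S → A → ℝ) (V' : S → ℝ)
    (hd1 : ∑ s, d s = 1)
    (hstat : ∀ s', ∑ s, d s * ∑ a, π s a * P s a s' = d s')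
    (hJ : Jπ = ∑ s, d s * ∑ a, π s a * r s a)
    (hV : ∀ s, V' s = ∑ a, π' s a * Q' s a)
    (hbell : ∀ s a, Q' s a = r s a - Jπ' + ∑ s', P s a s' * V' s') :
    Jπ - Jπ' = ∑ s, d s * ∑ a, π s a * (Q' s a - V' s) := by
  have inner : ∀ s, ∑ a, π s a * (Q' s a - V' s)
      = (∑ a, π s a * r s a) + (∑ a, π s a * ∑ s', P s a s' * V' s') - Jπ' - V' s := by
    intro s
    simp_rw [hbell, mul_sub, mul_add, Finset.sum_sub_distrib, Finset.sum_add_distrib,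
      ← Finset.sum_mul, hπ, one_mul]
    simp_rw [mul_sub, Finset.sum_sub_distrib, ← Finset.sum_mul, hπ, one_mul]
    ring
  have swap : ∑ s, d s * ∑ a, π s a * ∑ s', P s a s' * V' s' = ∑ s, d s * V' s := by
    have hs : ∀ s, d s * ∑ a, π s a * ∑ s', P s a s' * V' s'
        = ∑ s', ∑ a, d s * π s a * P s a s' * V' s' := by
      intro s
      simp_rw [Finset.mul_sum]
      rw [Finset.sum_comm]
      exact Finset.sum_congr rfl fun _ _ => Finset.sum_congr rfl fun _ _ => by ring
    have step1 : ∑ s, d s * ∑ a, π s a * ∑ s', P s a s' * V' s'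
        = ∑ s', ∑ s, ∑ a, d s * π s a * P s a s' * V' s' := by
      simp_rw [hs]
      rw [Finset.sum_comm]
    have step2 : ∀ s', ∑ s, ∑ a, d s * π s a * P s a s' * V' s'
        = (∑ s, d s * ∑ a, π s a * P s a s') * V' s' := by
      intro s'
      rw [Finset.sum_mul]
      refine Finset.sum_congr rfl fun s _ => ?_
      rw [Finset.mul_sum, Finset.sum_mul]
      exact Finset.sum_congr rfl fun a _ => by ring
    simp_rw [step1, step2, hstat]
  simp_rw [inner, mul_sub, mul_add, Finset.sum_sub_distrib, Finset.sum_add_distrib]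
  rw [swap, ← hJ, ← Finset.sum_mul, hd1, one_mul]
  ring
end

section
/- Policy gradient theorem for average reward: ∇_θ J(θ) = E_{s∼d^{π_θ}, a∼π_θ(·|s)}[Q^{π_θ}(s,a) ∇_θ log π_θ(a|s)], where d^{π_θ} is the stationary distribution and Q^{π_θ} satisfies the average-reward Bellman equation. -/
section Helpers

variable {F : Type*} [NormedAddCommGroup F] [InnerProductSpace ℝ F] [CompleteSpace F]

lemma hga_add {f g : F → ℝ} {f' g' x : F}
    (hf : HasGradientAt f f' x) (hg : HasGradientAt g g' x) :
    HasGradientAt (fun y => f y + g y) (f' + g') x := by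
  rw [hasGradientAt_iff_hasFDerivAt] at *
  simpa [map_add] using hf.fun_add hg

lemma hga_sub {f g : F → ℝ} {f' g' x : F}
    (hf : HasGradientAt f f' x) (hg : HasGradientAt g g' x) :
    HasGradientAt (fun y => f y - g y) (f' - g') x := by
  rw [hasGradientAt_iff_hasFDerivAt] at *
  simpa [map_sub] using hf.fun_sub hg

lemma hga_sum {ι : Type*} {t : Finset ι} {f : ι → F → ℝ} {f' : ι → F} {x : F}
    (hf : ∀ i ∈ t, HasGradientAt (f i) (f' i) x) :
    HasGradientAt (fun y => ∑ i ∈ t, f i y) (∑ i ∈ t, f' i) x := by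
  rw [hasGradientAt_iff_hasFDerivAt]
  simpa [map_sum] using HasFDerivAt.fun_sum (fun i hi => (hf i hi).hasFDerivAt)

lemma hga_mul {f g : F → ℝ} {f' g' x : F}
    (hf : HasGradientAt f f' x) (hg : HasGradientAt g g' x) :
    HasGradientAt (fun y => f y * g y) (f x • g' + g x • f') x := by
  rw [hasGradientAt_iff_hasFDerivAt] at *
  simpa [map_add, map_smul] using hf.fun_mul hg

lemma hga_const_mul {f : F → ℝ} {f' x : F} (c : ℝ)
    (hf : HasGradientAt f f' x) :
    HasGradientAt (fun y => c * f y) (c • f') x := by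
  rw [hasGradientAt_iff_hasFDerivAt] at *
  simpa [map_smul] using hf.const_mul c

lemma hga_const_add {f : F → ℝ} {f' x : F} (c : ℝ)
    (hf : HasGradientAt f f' x) :
    HasGradientAt (fun y => c + f y) f' x := by
  rw [hasGradientAt_iff_hasFDerivAt] at *
  simpa using hf.const_add c

end Helpers

/-- Policy gradient theorem for the average reward criterion:
`∇_θ J(θ) = E_{s∼d^{π_θ}, a∼π_θ(·|s)} [Q^{π_θ}(s,a) ∇_θ log π_θ(a|s)]`.
Since `π_θ(a|s) • ∇_θ log π_θ(a|s) = ∇_θ π_θ(a|s)`, the gradient is expressed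
using the gradients `gπ` of the policy probabilities. -/
theorem stmt_3 {S A : Type*} [Fintype S] [Fintype A] {n : ℕ}
    (P : S → A → S → ℝ) (r : S → A → ℝ)
    (π : EuclideanSpace ℝ (Fin n) → S → A → ℝ)
    (d : EuclideanSpace ℝ (Fin n) → S → ℝ)
    (J : EuclideanSpace ℝ (Fin n) → ℝ)
    (Q : EuclideanSpace ℝ (Fin n) → S → A → ℝ)
    (V : EuclideanSpace ℝ (Fin n) → S → ℝ)
    (θ : EuclideanSpace ℝ (Fin n))
    (gπ : S → A → EuclideanSpace ℝ (Fin n))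
    (gV : S → EuclideanSpace ℝ (Fin n))
    (hpos : ∀ θ' s a, 0 < π θ' s a)
    (hπsum : ∀ θ' s, ∑ a, π θ' s a = 1)
    (hd1 : ∀ θ', ∑ s, d θ' s = 1)
    (hstat : ∀ θ' s', ∑ s, d θ' s * ∑ a, π θ' s a * P s a s' = d θ' s')
    (hJ : ∀ θ', J θ' = ∑ s, d θ' s * ∑ a, π θ' s a * r s a)
    (hV : ∀ θ' s, V θ' s = ∑ a, π θ' s a * Q θ' s a)
    (hbell : ∀ θ' s a,
      Q θ' s a = r s a - J θ' + ∑ s', P s a s' * V θ' s')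
    (hgπ : ∀ s a, HasGradientAt (fun θ' => π θ' s a) (gπ s a) θ)
    (hgV : ∀ s, HasGradientAt (fun θ' => V θ' s) (gV s) θ) :
    HasGradientAt J
      (∑ s, d θ s • ∑ a, π θ s a • (Q θ s a • ((π θ s a)⁻¹ • gπ s a))) θ := by
  classical
  -- key scalar identity expressing J through π and V
  have hkey : ∀ θ' s,
      J θ' = (∑ a, π θ' s a * (r s a + ∑ s', P s a s' * V θ' s')) - V θ' s := by
    intro θ' s
    have h1 : V θ' s
        = (∑ a, π θ' s a * (r s a + ∑ s', P s a s' * V θ' s')) - J θ' := by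
      rw [hV θ' s]
      have : ∀ a ∈ (Finset.univ : Finset A), π θ' s a * Q θ' s a
          = π θ' s a * (r s a + ∑ s', P s a s' * V θ' s') - π θ' s a * J θ' := by
        intro a _; rw [hbell]; ring
      rw [Finset.sum_congr rfl this, Finset.sum_sub_distrib, ← Finset.sum_mul,
        hπsum, one_mul]
    linarith
  -- J equals the d-weighted combination of these expressions
  have hJF : J = fun θ' => ∑ s, d θ s *
      ((∑ a, π θ' s a * (r s a + ∑ s', P s a s' * V θ' s')) - V θ' s) := by
    funext θ'
    have : ∀ s ∈ (Finset.univ : Finset S), d θ s *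
        ((∑ a, π θ' s a * (r s a + ∑ s', P s a s' * V θ' s')) - V θ' s)
        = d θ s * J θ' := by
      intro s _; rw [← hkey]
    rw [Finset.sum_congr rfl this, ← Finset.sum_mul, hd1, one_mul]
  -- gradient of the weighted expression
  have hG : HasGradientAt J
      (∑ s, d θ s • ((∑ a, (π θ s a • ∑ s', P s a s' • gV s'
        + (r s a + ∑ s', P s a s' * V θ s') • gπ s a)) - gV s)) θ := by
    rw [hJF]
    refine hga_sum fun s _ => hga_const_mul _ (hga_sub (hga_sum fun a _ => ?_) (hgV s))
    exact hga_mul (hgπ s a) (hga_const_add _ (hga_sum fun s' _ => hga_const_mul _ (hgV s')))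
  -- the sum of policy gradients vanishes
  have hgπ0 : ∀ s, ∑ a, gπ s a = (0 : EuclideanSpace ℝ (Fin n)) := by
    intro s
    have h1 : HasGradientAt (fun θ' => ∑ a, π θ' s a) (∑ a, gπ s a) θ :=
      hga_sum fun a _ => hgπ s a
    have h2 : HasGradientAt (fun θ' => ∑ a, π θ' s a) 0 θ := by
      have : (fun θ' : EuclideanSpace ℝ (Fin n) => ∑ a, π θ' s a) = fun _ => (1 : ℝ) := by
        funext θ'; exact hπsum θ' s
      rw [this]; exact hasGradientAt_const θ 1
    exact h1.unique h2
  -- vector form of stationarity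
  have hstatv : ∑ s, d θ s • ∑ a, π θ s a • ∑ s', P s a s' • gV s'
      = ∑ s, d θ s • gV s := by
    calc ∑ s, d θ s • ∑ a, π θ s a • ∑ s', P s a s' • gV s'
        = ∑ s, ∑ a, ∑ s', (d θ s * (π θ s a * P s a s')) • gV s' := by
          simp [Finset.smul_sum, smul_smul]
      _ = ∑ s', ∑ s, ∑ a, (d θ s * (π θ s a * P s a s')) • gV s' := by
          rw [show (∑ s, ∑ a, ∑ s', (d θ s * (π θ s a * P s a s')) • gV s')
              = ∑ s, ∑ s', ∑ a, (d θ s * (π θ s a * P s a s')) • gV s'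
              from Finset.sum_congr rfl fun s _ => Finset.sum_comm]
          exact Finset.sum_comm
      _ = ∑ s', (∑ s, d θ s * ∑ a, π θ s a * P s a s') • gV s' := by
          refine Finset.sum_congr rfl fun s' _ => ?_
          rw [Finset.sum_smul]
          refine Finset.sum_congr rfl fun s _ => ?_
          rw [Finset.mul_sum, Finset.sum_smul]
      _ = ∑ s', d θ s' • gV s' := by
          refine Finset.sum_congr rfl fun s' _ => ?_
          rw [hstat]
  -- rewrite the target gradient
  have htar : ∀ s a, π θ s a • (Q θ s a • ((π θ s a)⁻¹ • gπ s a))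
      = Q θ s a • gπ s a := by
    intro s a
    rw [smul_smul, smul_smul]
    congr 1
    field_simp [ne_of_gt (hpos θ s a)]
  -- identify the two gradients
  have heq : (∑ s, d θ s • ((∑ a, (π θ s a • ∑ s', P s a s' • gV s'
        + (r s a + ∑ s', P s a s' * V θ s') • gπ s a)) - gV s))
      = ∑ s, d θ s • ∑ a, π θ s a • (Q θ s a • ((π θ s a)⁻¹ • gπ s a)) := by
    have hB : ∀ s, (∑ a, (r s a + ∑ s', P s a s' * V θ s') • gπ s a)
        = ∑ a, Q θ s a • gπ s a := by
      intro s
      have : ∀ a ∈ (Finset.univ : Finset A),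
          (r s a + ∑ s', P s a s' * V θ s') • gπ s a
          = Q θ s a • gπ s a + J θ • gπ s a := by
        intro a _
        have : r s a + ∑ s', P s a s' * V θ s' = Q θ s a + J θ := by
          rw [hbell]; ring
        rw [this, add_smul]
      rw [Finset.sum_congr rfl this, Finset.sum_add_distrib, ← Finset.smul_sum,
        hgπ0, smul_zero, add_zero]
    calc ∑ s, d θ s • ((∑ a, (π θ s a • ∑ s', P s a s' • gV s'
          + (r s a + ∑ s', P s a s' * V θ s') • gπ s a)) - gV s)
        = ∑ s, (d θ s • ∑ a, π θ s a • ∑ s', P s a s' • gV s'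
            + d θ s • ∑ a, Q θ s a • gπ s a - d θ s • gV s) := by
          refine Finset.sum_congr rfl fun s _ => ?_
          rw [Finset.sum_add_distrib, hB, smul_sub, smul_add]
      _ = (∑ s, d θ s • ∑ a, π θ s a • ∑ s', P s a s' • gV s')
            + (∑ s, d θ s • ∑ a, Q θ s a • gπ s a) - ∑ s, d θ s • gV s := by
          rw [Finset.sum_sub_distrib, Finset.sum_add_distrib]
      _ = ∑ s, d θ s • ∑ a, Q θ s a • gπ s a := by
          rw [hstatv]; abel
      _ = ∑ s, d θ s • ∑ a, π θ s a • (Q θ s a • ((π θ s a)⁻¹ • gπ s a)) := by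
          refine Finset.sum_congr rfl fun s _ => ?_
          congr 1
          exact Finset.sum_congr rfl fun a _ => (htar s a).symm
  rw [← heq]
  exact hG
end

section
/- Let J : ℝ^d → ℝ be L-smooth with |J(θ)| ≤ 1 for all θ, and let θ_{k+1} = θ_k + α ω_k with α = 1/(4L). Then (1/K) Σ_{k=1}^{K} ‖∇J(θ_k)‖² ≤ 16L/K + (16/3K) Σ_{k=1}^{K} ‖∇J(θ_k) − ω_k‖². -/
open InnerProductSpace in
lemma descent_aux {n : ℕ} (J : EuclideanSpace ℝ (Fin n) → ℝ)
    (gJ : EuclideanSpace ℝ (Fin n) → EuclideanSpace ℝ (Fin n))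
    (L : ℝ)
    (hgrad : ∀ x, HasGradientAt J (gJ x) x)
    (hlip : ∀ x y, ‖gJ x - gJ y‖ ≤ L * ‖x - y‖)
    (x y : EuclideanSpace ℝ (Fin n)) (hL : 0 ≤ L) :
    |J y - J x - inner ℝ (gJ x) (y - x)| ≤ L * ‖y - x‖ * ‖y - x‖ := by
  have key := Convex.norm_image_sub_le_of_norm_hasFDerivWithin_le'
    (f := J) (f' := fun z => (toDual ℝ (EuclideanSpace ℝ (Fin n))) (gJ z))
    (φ := (toDual ℝ (EuclideanSpace ℝ (Fin n))) (gJ x))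
    (s := segment ℝ x y) (C := L * ‖y - x‖)
    (fun z _ => ((hgrad z).hasFDerivAt).hasFDerivWithinAt)
    (fun z hz => by
      rw [← map_sub, (toDual ℝ (EuclideanSpace ℝ (Fin n))).norm_map]
      refine le_trans (hlip z x) ?_
      obtain ⟨a, b, ha, hb, hab, rfl⟩ := hz
      have : a • x + b • y - x = b • (y - x) := by
        rw [smul_sub]
        rw [show a = 1 - b by linarith]
        module
      rw [this, norm_smul]
      simp only [Real.norm_eq_abs, abs_of_nonneg hb]
      have hb1 : b ≤ 1 := by linarith
      nlinarith [norm_nonneg (y - x), mul_le_mul_of_nonneg_left (mul_le_of_le_one_left (norm_nonneg (y - x)) hb1) hL])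
    (convex_segment x y) (left_mem_segment ℝ x y) (right_mem_segment ℝ x y)
  simpa [toDual_apply_apply, Real.norm_eq_abs, mul_assoc] using key

/-- Averaged gradient-norm bound for the approximate gradient ascent
`θ_{k+1} = θ_k + (1/(4L)) ω_k` on an `L`-smooth objective bounded by `1`:
`(1/K) Σ_{k=1}^K ‖∇J(θ_k)‖² ≤ 16L/K + (16/(3K)) Σ_{k=1}^K ‖∇J(θ_k) − ω_k‖²`. -/
theorem stmt_5 {n : ℕ}
    (J : EuclideanSpace ℝ (Fin n) → ℝ)
    (gJ : EuclideanSpace ℝ (Fin n) → EuclideanSpace ℝ (Fin n))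
    (L : ℝ) (hL : 0 < L)
    (hgrad : ∀ x, HasGradientAt J (gJ x) x)
    (hlip : ∀ x y, ‖gJ x - gJ y‖ ≤ L * ‖x - y‖)
    (hbdd : ∀ x, |J x| ≤ 1)
    (θ ω : ℕ → EuclideanSpace ℝ (Fin n))
    (hupd : ∀ k, θ (k + 1) = θ k + (1 / (4 * L)) • ω k)
    (K : ℕ) (hK : 1 ≤ K) :
    (1 / (K : ℝ)) * ∑ k ∈ Finset.Icc 1 K, ‖gJ (θ k)‖ ^ 2
      ≤ 16 * L / (K : ℝ)
        + (16 / (3 * (K : ℝ))) * ∑ k ∈ Finset.Icc 1 K, ‖gJ (θ k) - ω k‖ ^ 2 := by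
  have hL' : (L : ℝ) ≠ 0 := ne_of_gt hL
  -- per-step inequality
  have step : ∀ k, ‖gJ (θ k)‖ ^ 2 ≤ 8 * L * (J (θ (k+1)) - J (θ k)) + ‖gJ (θ k) - ω k‖ ^ 2 := by
    intro k
    have hdiff : θ (k+1) - θ k = (1 / (4 * L)) • ω k := by rw [hupd k]; abel
    have hdesc := descent_aux J gJ L hgrad hlip (θ k) (θ (k+1)) hL.le
    rw [hdiff] at hdesc
    have hip : inner ℝ (gJ (θ k)) ((1 / (4 * L)) • ω k) =
        (1 / (4 * L)) * inner ℝ (gJ (θ k)) (ω k) := real_inner_smul_right _ _ _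
    have hnorm : ‖(1 / (4 * L)) • ω k‖ = (1 / (4 * L)) * ‖ω k‖ := by
      rw [norm_smul, Real.norm_eq_abs, abs_of_pos (by positivity)]
    rw [hip, hnorm] at hdesc
    set G := ‖gJ (θ k)‖ with hG
    set E := ‖gJ (θ k) - ω k‖ with hE
    set W := ‖ω k‖ with hW
    set p : ℝ := inner ℝ (gJ (θ k)) (gJ (θ k) - ω k) with hp
    have hGE : p ≤ G * E := real_inner_le_norm _ _
    have hiw : (inner ℝ (gJ (θ k)) (ω k) : ℝ) = G ^ 2 - p := by
      rw [hp, inner_sub_right, hG, real_inner_self_eq_norm_sq]; ring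
    have hW2 : W ^ 2 = G ^ 2 - 2 * p + E ^ 2 := by
      have : ω k = gJ (θ k) - (gJ (θ k) - ω k) := by abel
      rw [hW, this, norm_sub_sq_real, ← hG, ← hE, ← hp]
    rw [hiw] at hdesc
    have habs := abs_le.mp hdesc
    have hG0 : 0 ≤ G := norm_nonneg _
    have hE0 : 0 ≤ E := norm_nonneg _
    have h2p : 2 * p ≤ G ^ 2 + E ^ 2 := by nlinarith
    have h1 := habs.1
    have hRW : L * (1 / (4 * L) * W) * (1 / (4 * L) * W) = W ^ 2 / (16 * L) := by
      field_simp; ring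
    rw [hRW] at h1
    have key : (3 * G ^ 2 - 2 * p - E ^ 2) / (16 * L) ≤ J (θ (k+1)) - J (θ k) := by
      have heq : (3 * G ^ 2 - 2 * p - E ^ 2) / (16 * L)
          = 1 / (4 * L) * (G ^ 2 - p) - W ^ 2 / (16 * L) := by
        rw [hW2]; field_simp; ring
      rw [heq]; linarith
    have h16 : (0:ℝ) < 16 * L := by linarith
    rw [div_le_iff₀ h16] at key
    nlinarith [key, h2p]
  -- telescoping
  have htel : ∑ k ∈ Finset.Icc 1 K, (J (θ (k+1)) - J (θ k)) = J (θ (K+1)) - J (θ 1) := by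
    rw [← Finset.Ico_add_one_right_eq_Icc, Finset.sum_Ico_eq_sum_range]
    simp only [Nat.add_sub_cancel]
    calc ∑ i ∈ Finset.range K, (J (θ (1 + i + 1)) - J (θ (1 + i)))
        = ∑ i ∈ Finset.range K, (J (θ ((i+1) + 1)) - J (θ (i + 1))) := by
          apply Finset.sum_congr rfl; intro i _; rw [add_comm 1 i]
      _ = J (θ (K+1)) - J (θ 1) := by simpa using Finset.sum_range_sub (fun i => J (θ (i+1))) K
  have hsum : ∑ k ∈ Finset.Icc 1 K, ‖gJ (θ k)‖ ^ 2
      ≤ 16 * L + ∑ k ∈ Finset.Icc 1 K, ‖gJ (θ k) - ω k‖ ^ 2 := by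
    calc ∑ k ∈ Finset.Icc 1 K, ‖gJ (θ k)‖ ^ 2
        ≤ ∑ k ∈ Finset.Icc 1 K, (8 * L * (J (θ (k+1)) - J (θ k)) + ‖gJ (θ k) - ω k‖ ^ 2) :=
          Finset.sum_le_sum (fun k _ => step k)
      _ = 8 * L * (J (θ (K+1)) - J (θ 1)) + ∑ k ∈ Finset.Icc 1 K, ‖gJ (θ k) - ω k‖ ^ 2 := by
          rw [Finset.sum_add_distrib, ← Finset.mul_sum, htel]
      _ ≤ 16 * L + ∑ k ∈ Finset.Icc 1 K, ‖gJ (θ k) - ω k‖ ^ 2 := by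
          have h1 := abs_le.mp (hbdd (θ (K+1)))
          have h2 := abs_le.mp (hbdd (θ 1))
          nlinarith
  have hK0 : (0:ℝ) < K := by exact_mod_cast hK
  have hS : (0:ℝ) ≤ ∑ k ∈ Finset.Icc 1 K, ‖gJ (θ k) - ω k‖ ^ 2 :=
    Finset.sum_nonneg (fun k _ => by positivity)
  set S := ∑ k ∈ Finset.Icc 1 K, ‖gJ (θ k) - ω k‖ ^ 2
  set T := ∑ k ∈ Finset.Icc 1 K, ‖gJ (θ k)‖ ^ 2
  calc (1 / (K:ℝ)) * T ≤ (1 / (K:ℝ)) * (16 * L + (16/3) * S) := by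
        apply mul_le_mul_of_nonneg_left _ (by positivity)
        linarith
    _ = 16 * L / (K:ℝ) + (16 / (3 * (K:ℝ))) * S := by
        field_simp
end

section
/- If a probability distribution over the number of successes M satisfies Pr(M ≤ M₀) ≤ δ and Pr(M > 0) ≥ 1 − δ for some δ ∈ [0, 1/2] and M₀ ≥ 1, then E[1/M | M > 0] ≤ (δ + 1/M₀)/(1 − δ). -/
/-- Bound on the conditional expectation of `1/M` given `M > 0`: if
`Pr(M ≤ M₀) ≤ δ` and `Pr(M > 0) ≥ 1 − δ` with `δ ∈ [0, 1/2]` and `M₀ ≥ 1`, then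
`E[1/M | M > 0] ≤ (δ + 1/M₀)/(1 − δ)`. -/
theorem stmt_14 (p : ℕ → ℝ) (δ : ℝ) (M₀ : ℕ)
    (hp : ∀ m, 0 ≤ p m) (hsum : Summable p) (htot : ∑' m, p m = 1)
    (hδ0 : 0 ≤ δ) (hδ1 : δ ≤ 1 / 2) (hM₀ : 1 ≤ M₀)
    (hsmall : ∑ m ∈ Finset.range (M₀ + 1), p m ≤ δ)
    (hpos : 1 - δ ≤ ∑' m, p (m + 1)) :
    (∑' m : ℕ, (1 / ((m : ℝ) + 1)) * p (m + 1)) / (∑' m, p (m + 1))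
      ≤ (δ + 1 / (M₀ : ℝ)) / (1 - δ) := by
  have hM₀R : (1 : ℝ) ≤ (M₀ : ℝ) := by exact_mod_cast hM₀
  have hM₀pos : (0 : ℝ) < (M₀ : ℝ) := by linarith
  have hsum1 : Summable (fun m => p (m + 1)) := (summable_nat_add_iff 1).mpr hsum
  -- define the majorant g
  set g : ℕ → ℝ := fun m => if m + 1 ≤ M₀ then p (m + 1) else (1 / (M₀ : ℝ)) * p (m + 1)
    with hg
  have hgle : ∀ m, g m ≤ p (m + 1) := by
    intro m
    by_cases h : m + 1 ≤ M₀ <;> simp only [hg, h, if_true, if_false]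
    · exact le_rfl
    · calc (1 / (M₀ : ℝ)) * p (m + 1) ≤ 1 * p (m + 1) :=
            mul_le_mul_of_nonneg_right (by rw [div_le_one hM₀pos]; exact hM₀R) (hp _)
        _ = p (m + 1) := one_mul _
  have hgnn : ∀ m, 0 ≤ g m := by
    intro m
    by_cases h : m + 1 ≤ M₀ <;> simp only [hg, h, if_true, if_false]
    · exact hp _
    · exact mul_nonneg (by positivity) (hp _)
  have hgsum : Summable g := by
    apply Summable.of_nonneg_of_le hgnn hgle hsum1
  -- termwise bound of the numerator by g
  have hterm : ∀ m : ℕ, (1 / ((m : ℝ) + 1)) * p (m + 1) ≤ g m := by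
    intro m
    by_cases h : m + 1 ≤ M₀ <;> simp only [hg, h, if_true, if_false]
    · have h1 : (1 : ℝ) / ((m : ℝ) + 1) ≤ 1 := by
        rw [div_le_one (by positivity)]; linarith [Nat.cast_nonneg (α := ℝ) m]
      nlinarith [hp (m + 1)]
    · have h1 : (M₀ : ℝ) ≤ (m : ℝ) + 1 := by
        have : M₀ ≤ m + 1 := le_of_not_ge h
        exact_mod_cast this
      have h2 : (1 : ℝ) / ((m : ℝ) + 1) ≤ 1 / (M₀ : ℝ) :=
        one_div_le_one_div_of_le hM₀pos h1
      exact mul_le_mul_of_nonneg_right h2 (hp _)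
  have hnumsum : Summable (fun m : ℕ => (1 / ((m : ℝ) + 1)) * p (m + 1)) := by
    apply Summable.of_nonneg_of_le (fun m => mul_nonneg (by positivity) (hp _))
      (fun m => le_trans (hterm m) (hgle m)) hsum1
  have hnum1 : (∑' m : ℕ, (1 / ((m : ℝ) + 1)) * p (m + 1)) ≤ ∑' m, g m :=
    Summable.tsum_le_tsum hterm hnumsum hgsum
  -- compute Σ g split at M₀
  have hsplit := (Summable.sum_add_tsum_nat_add M₀ hgsum).symm
  have hgsumval : ∑' m, g m ≤ δ + 1 / (M₀ : ℝ) := by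
    rw [hsplit]
    have hA : ∑ m ∈ Finset.range M₀, g m ≤ δ := by
      have h1 : ∑ m ∈ Finset.range M₀, g m = ∑ m ∈ Finset.range M₀, p (m + 1) := by
        apply Finset.sum_congr rfl
        intro m hm
        simp only [hg]
        rw [if_pos (Nat.succ_le_of_lt (Finset.mem_range.mp hm))]
      rw [h1]
      have h2 : ∑ m ∈ Finset.range (M₀ + 1), p m
          = ∑ m ∈ Finset.range M₀, p (m + 1) + p 0 := Finset.sum_range_succ' p M₀
      linarith [hp 0]
    have hB : ∑' m : ℕ, g (m + M₀) ≤ 1 / (M₀ : ℝ) := by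
      have h1 : ∀ m : ℕ, g (m + M₀) = (1 / (M₀ : ℝ)) * p (m + M₀ + 1) := by
        intro m
        simp only [hg]
        rw [if_neg (by omega)]
      rw [tsum_congr h1, tsum_mul_left]
      have htail : ∑' m : ℕ, p (m + (M₀ + 1)) ≤ 1 := by
        have h2 := (Summable.sum_add_tsum_nat_add (M₀ + 1) hsum).symm
        have h3 : 0 ≤ ∑ m ∈ Finset.range (M₀ + 1), p m :=
          Finset.sum_nonneg fun m _ => hp m
        rw [htot] at h2
        linarith
      have htail' : ∑' m : ℕ, p (m + M₀ + 1) ≤ 1 := by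
        have : (fun m : ℕ => p (m + M₀ + 1)) = fun m : ℕ => p (m + (M₀ + 1)) := by
          funext m; congr 1
        rw [this]; exact htail
      calc (1 / (M₀ : ℝ)) * ∑' m : ℕ, p (m + M₀ + 1)
          ≤ (1 / (M₀ : ℝ)) * 1 :=
            mul_le_mul_of_nonneg_left htail' (by positivity)
        _ = 1 / (M₀ : ℝ) := mul_one _
    linarith
  have hnum : (∑' m : ℕ, (1 / ((m : ℝ) + 1)) * p (m + 1)) ≤ δ + 1 / (M₀ : ℝ) :=
    le_trans hnum1 hgsumval
  have hden : (0 : ℝ) < 1 - δ := by linarith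
  exact div_le_div₀ (by positivity) hnum hden hpos
end
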